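/- arXiv:2503.01529 — 2 statements merged into one kernel-verified Lean document; each statement's English description precedes it below -/
import Mathlib

section
/- For all q*, q_k ∈ [0,1] with q* ≤ q_k and all valuations s, b̄, b̲ ∈ [0,1] with b̲ ≤ b̄, the difference of the strong-budget-balance gains from trade is bounded by the indicator of the in-between event: (b̄ − s)·𝟙(b̄ ≥ q*)·𝟙(s ≤ max{q*, b̲}) − (b̄ − s)·𝟙(b̄ ≥ q_k)·𝟙(s ≤ max{q_k, b̲}) ≤ 𝟙(q* ≤ b̄ < q_k). -/
/-- The difference of SBB gains from trade at reserve prices `q* ≤ q_k` is bounded by the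
indicator of the event `q* ≤ b̄ < q_k`. -/
theorem sbb_gft_difference_le_indicator
    (qstar qk s bbar blow : ℝ)
    (hqstar : qstar ∈ Set.Icc (0:ℝ) 1) (hqk : qk ∈ Set.Icc (0:ℝ) 1)
    (hle : qstar ≤ qk)
    (hs : s ∈ Set.Icc (0:ℝ) 1) (hbbar : bbar ∈ Set.Icc (0:ℝ) 1)
    (hblow : blow ∈ Set.Icc (0:ℝ) 1) (hbb : blow ≤ bbar) :
    (bbar - s) * (if qstar ≤ bbar then (1:ℝ) else 0)
        * (if s ≤ max qstar blow then (1:ℝ) else 0)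
      - (bbar - s) * (if qk ≤ bbar then (1:ℝ) else 0)
        * (if s ≤ max qk blow then (1:ℝ) else 0)
      ≤ (if qstar ≤ bbar ∧ bbar < qk then (1:ℝ) else 0) := by
  obtain ⟨hs0, hs1⟩ := hs
  obtain ⟨hb0, hb1⟩ := hbbar
  have hmax : max qstar blow ≤ max qk blow := max_le_max hle le_rfl
  split_ifs <;>
    simp_all [le_max_iff, not_le, not_and, not_lt] <;>
    first
      | linarith
      | (rcases ‹_ ∨ _› with h | h <;> linarith)
end

section
/- Let (s, b̄) be a pair of [0,1]-valued random variables with s independent of b̄. Fix p*, q* ∈ [0,1] and suppose E[(b̄ − p*)·𝟙(b̄ ≥ q*)] ≥ 0. Then for any p_k with p* ≤ p_k ≤ p* + Δ, the expected gain from trade satisfies E[(b̄ − s)·𝟙(s ≤ p*)·𝟙(b̄ ≥ q*)] − E[(b̄ − s)·𝟙(s ≤ p_k)·𝟙(b̄ ≥ q*)] ≤ Δ. -/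
open MeasureTheory

/-- Under independence of `s` and `b̄`, if `E[(b̄ − p*)·𝟙(b̄ ≥ q*)] ≥ 0` and
`p* ≤ p_k ≤ p* + Δ`, then `GFT(p*, q*) − GFT(p_k, q*) ≤ Δ`. -/
theorem gft_grid_approx_independent
    {Ω : Type*} [MeasurableSpace Ω] (μ : Measure Ω) [IsProbabilityMeasure μ]
    (s b : Ω → ℝ) (hsm : Measurable s) (hbm : Measurable b)
    (hs01 : ∀ ω, s ω ∈ Set.Icc (0:ℝ) 1) (hb01 : ∀ ω, b ω ∈ Set.Icc (0:ℝ) 1)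
    (hind : ProbabilityTheory.IndepFun s b μ)
    (pstar qstar pk Δ : ℝ)
    (hpstar : pstar ∈ Set.Icc (0:ℝ) 1) (hqstar : qstar ∈ Set.Icc (0:ℝ) 1)
    (hpos : 0 ≤ ∫ ω, (b ω - pstar) * (if qstar ≤ b ω then (1:ℝ) else 0) ∂μ)
    (h1 : pstar ≤ pk) (h2 : pk ≤ pstar + Δ) :
    (∫ ω, (b ω - s ω) * (if s ω ≤ pstar then (1:ℝ) else 0)
          * (if qstar ≤ b ω then (1:ℝ) else 0) ∂μ)
      - (∫ ω, (b ω - s ω) * (if s ω ≤ pk then (1:ℝ) else 0)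
          * (if qstar ≤ b ω then (1:ℝ) else 0) ∂μ)
      ≤ Δ := by
  have hΔ : 0 ≤ Δ := by linarith
  -- auxiliary real functions
  set g1 : ℝ → ℝ := fun x => (x - pstar) *
      ((if pstar < x then (1:ℝ) else 0) * (if x ≤ pk then (1:ℝ) else 0)) with hg1
  set g2 : ℝ → ℝ := fun y => if qstar ≤ y then (1:ℝ) else 0 with hg2
  set g3 : ℝ → ℝ := fun x =>
      (if pstar < x then (1:ℝ) else 0) * (if x ≤ pk then (1:ℝ) else 0) with hg3
  set g4 : ℝ → ℝ := fun y => (pstar - y) * (if qstar ≤ y then (1:ℝ) else 0) with hg4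
  have mg1 : Measurable g1 := by
    apply Measurable.mul (measurable_id.sub measurable_const)
    exact ((measurable_const.ite (measurableSet_lt measurable_const measurable_id)
      measurable_const).mul (measurable_const.ite
      (measurableSet_le measurable_id measurable_const) measurable_const))
  have mg2 : Measurable g2 := measurable_const.ite
      (measurableSet_le measurable_const measurable_id) measurable_const
  have mg3 : Measurable g3 :=
    ((measurable_const.ite (measurableSet_lt measurable_const measurable_id)
      measurable_const).mul (measurable_const.ite
      (measurableSet_le measurable_id measurable_const) measurable_const))
  have mg4 : Measurable g4 := by
    exact (measurable_const.sub measurable_id).mul mg2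
  -- integrability helpers
  have hbound : ∀ (f : Ω → ℝ) (C : ℝ), Measurable f → (∀ ω, ‖f ω‖ ≤ C) → Integrable f μ := by
    intro f C hf hC
    exact (integrable_const C).mono' hf.aestronglyMeasurable (Filter.Eventually.of_forall hC)
  have hib1 : Integrable (fun ω => g1 (s ω)) μ := by
    refine hbound _ 2 (mg1.comp hsm) fun ω => ?_
    have h := hs01 ω
    simp only [hg1, Real.norm_eq_abs]
    have : |s ω - pstar| ≤ 2 := by
      rw [abs_le]; constructor <;> [linarith [h.1, hpstar.2]; linarith [h.2, hpstar.1]]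
    calc |(s ω - pstar) * _| = |s ω - pstar| * |(if pstar < s ω then (1:ℝ) else 0) * (if s ω ≤ pk then (1:ℝ) else 0)| := abs_mul _ _
      _ ≤ 2 * 1 := by
          apply mul_le_mul this _ (abs_nonneg _) (by norm_num)
          rw [abs_mul]
          apply mul_le_one₀ <;> split <;> simp
      _ = 2 := by norm_num
  have hib2 : Integrable (fun ω => g2 (b ω)) μ := by
    refine hbound _ 1 (mg2.comp hbm) fun ω => ?_
    simp only [hg2, Real.norm_eq_abs]; split <;> simp
  have hib3 : Integrable (fun ω => g3 (s ω)) μ := by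
    refine hbound _ 1 (mg3.comp hsm) fun ω => ?_
    simp only [hg3, Real.norm_eq_abs]
    rw [abs_mul]; apply mul_le_one₀ <;> split <;> simp
  have hib4 : Integrable (fun ω => g4 (b ω)) μ := by
    refine hbound _ 2 (mg4.comp hbm) fun ω => ?_
    have h := hb01 ω
    simp only [hg4, Real.norm_eq_abs, abs_mul]
    have h5 : |pstar - b ω| ≤ 2 := by
      rw [abs_le]; constructor <;> [linarith [h.2, hpstar.1]; linarith [h.1, hpstar.2]]
    calc |pstar - b ω| * |if qstar ≤ b ω then (1:ℝ) else 0| ≤ 2 * 1 := by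
          apply mul_le_mul h5 _ (abs_nonneg _) (by norm_num)
          split <;> simp
      _ = 2 := by norm_num
  -- integrands in statement
  have hiA : ∀ p : ℝ, Integrable (fun ω => (b ω - s ω) * (if s ω ≤ p then (1:ℝ) else 0)
      * (if qstar ≤ b ω then (1:ℝ) else 0)) μ := by
    intro p
    refine hbound _ 1 ?_ fun ω => ?_
    · exact ((hbm.sub hsm).mul (measurable_const.ite
        (measurableSet_le hsm measurable_const) measurable_const)).mul
        (measurable_const.ite (measurableSet_le measurable_const hbm) measurable_const)
    · have hb := hb01 ω; have hs := hs01 ω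
      rw [Real.norm_eq_abs, abs_mul, abs_mul]
      have h6 : |b ω - s ω| ≤ 1 := by
        rw [abs_le]; constructor <;> [linarith [hb.1, hs.2]; linarith [hb.2, hs.1]]
      calc |b ω - s ω| * |if s ω ≤ p then (1:ℝ) else 0| * |if qstar ≤ b ω then (1:ℝ) else 0|
          ≤ 1 * 1 * 1 := by
            apply mul_le_mul _ _ (abs_nonneg _) (by norm_num)
            · apply mul_le_mul h6 _ (abs_nonneg _) (by norm_num)
              split <;> simp
            · split <;> simp
        _ = 1 := by norm_num
  have hip1 : Integrable (fun ω => g1 (s ω) * g2 (b ω)) μ := by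
    refine hbound _ 2 ((mg1.comp hsm).mul (mg2.comp hbm)) fun ω => ?_
    rw [Real.norm_eq_abs, abs_mul]
    have hb1 : |g1 (s ω)| ≤ 2 := by
      have := hib1  -- reuse bound proof idea
      have h := hs01 ω
      simp only [hg1]
      rw [abs_mul]
      have h5 : |s ω - pstar| ≤ 2 := by
        rw [abs_le]; constructor <;> [linarith [h.1, hpstar.2]; linarith [h.2, hpstar.1]]
      calc |s ω - pstar| * |(if pstar < s ω then (1:ℝ) else 0) * (if s ω ≤ pk then (1:ℝ) else 0)|
          ≤ 2 * 1 := by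
            apply mul_le_mul h5 _ (abs_nonneg _) (by norm_num)
            rw [abs_mul]; apply mul_le_one₀ <;> split <;> simp
        _ = 2 := by norm_num
    have hb2 : |g2 (b ω)| ≤ 1 := by simp only [hg2]; split <;> simp
    calc |g1 (s ω)| * |g2 (b ω)| ≤ 2 * 1 :=
          mul_le_mul hb1 hb2 (abs_nonneg _) (by norm_num)
      _ = 2 := by norm_num
  have hip2 : Integrable (fun ω => g3 (s ω) * g4 (b ω)) μ := by
    refine hbound _ 2 ((mg3.comp hsm).mul (mg4.comp hbm)) fun ω => ?_
    rw [Real.norm_eq_abs, abs_mul]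
    have hb3 : |g3 (s ω)| ≤ 1 := by
      simp only [hg3]; rw [abs_mul]; apply mul_le_one₀ <;> split <;> simp
    have hb4 : |g4 (b ω)| ≤ 2 := by
      have h := hb01 ω
      simp only [hg4]; rw [abs_mul]
      have h5 : |pstar - b ω| ≤ 2 := by
        rw [abs_le]; constructor <;> [linarith [h.2, hpstar.1]; linarith [h.1, hpstar.2]]
      calc |pstar - b ω| * |if qstar ≤ b ω then (1:ℝ) else 0| ≤ 2 * 1 := by
            apply mul_le_mul h5 _ (abs_nonneg _) (by norm_num)
            split <;> simp
        _ = 2 := by norm_num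
    calc |g3 (s ω)| * |g4 (b ω)| ≤ 1 * 2 :=
          mul_le_mul hb3 hb4 (abs_nonneg _) (by norm_num)
      _ = 2 := by norm_num
  -- rewrite the difference as sum of two product integrals
  have key : (∫ ω, (b ω - s ω) * (if s ω ≤ pstar then (1:ℝ) else 0)
          * (if qstar ≤ b ω then (1:ℝ) else 0) ∂μ)
      - (∫ ω, (b ω - s ω) * (if s ω ≤ pk then (1:ℝ) else 0)
          * (if qstar ≤ b ω then (1:ℝ) else 0) ∂μ)
      = (∫ ω, g1 (s ω) * g2 (b ω) ∂μ) + (∫ ω, g3 (s ω) * g4 (b ω) ∂μ) := by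
    rw [← integral_sub (hiA pstar) (hiA pk), ← integral_add hip1 hip2]
    apply integral_congr_ae
    filter_upwards with ω
    simp only [hg1, hg2, hg3, hg4]
    by_cases hA : s ω ≤ pstar
    · have hB : s ω ≤ pk := le_trans hA h1
      have hC : ¬ pstar < s ω := not_lt.mpr hA
      simp [hA, hB, hC]
    · have hC : pstar < s ω := lt_of_not_ge hA
      by_cases hB : s ω ≤ pk
      · simp only [if_neg hA, if_pos hB, if_pos hC]
        by_cases hq : qstar ≤ b ω <;> simp [hq] <;> ring
      · simp [hA, hB]
  rw [key]
  -- factor using independence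
  have hfac1 : (∫ ω, g1 (s ω) * g2 (b ω) ∂μ)
      = (∫ ω, g1 (s ω) ∂μ) * (∫ ω, g2 (b ω) ∂μ) :=
    ProbabilityTheory.IndepFun.integral_fun_mul_eq_mul_integral
      (hind.comp mg1 mg2) hib1.aestronglyMeasurable hib2.aestronglyMeasurable
  have hfac2 : (∫ ω, g3 (s ω) * g4 (b ω) ∂μ)
      = (∫ ω, g3 (s ω) ∂μ) * (∫ ω, g4 (b ω) ∂μ) :=
    ProbabilityTheory.IndepFun.integral_fun_mul_eq_mul_integral
      (hind.comp mg3 mg4) hib3.aestronglyMeasurable hib4.aestronglyMeasurable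
  rw [hfac1, hfac2]
  -- bounds on the factors
  have hI1_nonneg : 0 ≤ ∫ ω, g1 (s ω) ∂μ := by
    apply integral_nonneg
    intro ω
    simp only [hg1]
    by_cases hC : pstar < s ω
    · by_cases hB : s ω ≤ pk
      · simp only [Pi.zero_apply, if_pos hC, if_pos hB]
        nlinarith [hC.le]
      · simp [hB]
    · simp [hC]
  have hI1_le : (∫ ω, g1 (s ω) ∂μ) ≤ Δ := by
    calc (∫ ω, g1 (s ω) ∂μ) ≤ ∫ _ω, Δ ∂μ := by
          apply integral_mono hib1 (integrable_const Δ)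
          intro ω
          simp only [hg1]
          by_cases hC : pstar < s ω
          · by_cases hB : s ω ≤ pk
            · simp only [if_pos hC, if_pos hB]; nlinarith
            · simp [hB, hΔ]
          · simp [hC, hΔ]
      _ = Δ := by simp
  have hI2_nonneg : 0 ≤ ∫ ω, g2 (b ω) ∂μ := by
    apply integral_nonneg; intro ω; simp only [hg2]; split <;> norm_num
  have hI2_le : (∫ ω, g2 (b ω) ∂μ) ≤ 1 := by
    calc (∫ ω, g2 (b ω) ∂μ) ≤ ∫ _ω, (1:ℝ) ∂μ := by
          apply integral_mono hib2 (integrable_const 1)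
          intro ω; simp only [hg2]; split <;> norm_num
      _ = 1 := by simp
  have hI3_nonneg : 0 ≤ ∫ ω, g3 (s ω) ∂μ := by
    apply integral_nonneg; intro ω; simp only [hg3]
    split <;> split <;> norm_num
  have hI4_nonpos : (∫ ω, g4 (b ω) ∂μ) ≤ 0 := by
    have : (∫ ω, g4 (b ω) ∂μ)
        = - ∫ ω, (b ω - pstar) * (if qstar ≤ b ω then (1:ℝ) else 0) ∂μ := by
      rw [← integral_neg]
      apply integral_congr_ae
      filter_upwards with ω
      simp only [hg4]; ring
    rw [this]
    linarith
  have t1 : (∫ ω, g1 (s ω) ∂μ) * (∫ ω, g2 (b ω) ∂μ) ≤ Δ := by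
    calc (∫ ω, g1 (s ω) ∂μ) * (∫ ω, g2 (b ω) ∂μ) ≤ Δ * 1 :=
          mul_le_mul hI1_le hI2_le hI2_nonneg hΔ
      _ = Δ := by ring
  have t2 : (∫ ω, g3 (s ω) ∂μ) * (∫ ω, g4 (b ω) ∂μ) ≤ 0 :=
    mul_nonpos_of_nonneg_of_nonpos hI3_nonneg hI4_nonpos
  linarith
end
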